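/- The Random Eviction (RE) Markov chain on B-subsets of {1,...,N}, where a transition from state s to state (s \ {ℓ}) ∪ {n} (with ℓ ∈ s, n ∉ s) occurs at rate λ_n/B, satisfies detailed balance with respect to w(s) = ∏_{n∈s} λ_n; hence π(s) = ∏_{n∈s} λ_n / Σ_{s'} ∏_{n∈s'} λ_n is a reversible invariant distribution. -/

import Mathlib

open Finset

/-- The Random Eviction (RE) chain on B-subsets satisfies detailed balance with
respect to `w(s) = ∏_{i∈s} λ_i`: a miss for `n ∉ s` evicting `ℓ ∈ s` occurs at
rate `λ_n / B`, and the reverse transition at rate `λ_ℓ / B`. -/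
theorem re_detailed_balance (N B : ℕ) (hB : 0 < B) (hBN : B < N)
    (lam : Fin N → ℝ) (hlam : ∀ n, 0 < lam n)
    (s : Finset (Fin N)) (hs : s.card = B)
    (l : Fin N) (hl : l ∈ s) (n : Fin N) (hn : n ∉ s) :
    (∏ i ∈ s, lam i) * (lam n / B) =
      (∏ i ∈ insert n (s.erase l), lam i) * (lam l / B) := by
  have hne : n ∉ s.erase l := fun h => hn (mem_of_mem_erase h)
  rw [prod_insert hne, ← mul_prod_erase s lam hl]
  ring
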